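/- arXiv:1311.0412 — 3 statements merged into one kernel-verified Lean document; each statement's English description precedes it below -/
import Mathlib

section
/- Let H1 and H2 be separable Hilbert spaces and let T : H1 -> H2 be a compact injective linear operator with singular value system {mu_k; phi_{1k}, phi_{0k}}_{k=1}^infinity: (phi_{1k}) is an orthonormal basis of H1, (phi_{0k}) is an orthonormal basis of H2, mu_1 >= mu_2 >= ... > 0 with mu_k -> 0, and T phi_{1k} = mu_k phi_{0k} for all k. Let Psi_J be a J-dimensional subspace of H1, let B_K be a K-dimensional subspace of H2 with J <= K, let Pi_K be the orthogonal projection of H2 onto B_K, and define sigma_{JK} = inf{ ||Pi_K T h|| : h in Psi_J, ||h|| = 1 } and tau_{2,2,J} = sup{ ||h|| / ||T h|| : h in Psi_J, T h != 0 }. Then: (1) sigma_{JK}^{-1} >= tau_{2,2,J} >= 1/mu_J; (2) if Psi_J equals the linear span of {phi_{11}, ..., phi_{1J}}, then tau_{2,2,J} <= 1/mu_J; (3) if in addition B_K contains the linear span of {phi_{01}, ..., phi_{0J}}, then sigma_{JK}^{-1} <= 1/mu_J, and hence sigma_{JK}^{-1} = tau_{2,2,J} = 1/mu_J. -/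
noncomputable section
open Filter Submodule

/-- Lemma on measures of ill-posedness: relations between the
sieve measures of ill-posedness `σ_JK`, `τ_{2,2,J}` and the singular values
`μ_J` of a compact injective operator `T` with singular value system
`{μ_k; φ1_k, φ0_k}` (indexed here by `k : ℕ`, so the paper's `μ_J` is `μ (J-1)`).
Part (1), `σ_JK⁻¹ ≥ τ_{2,2,J} ≥ 1/μ_J`, is stated in the equivalent
inverse-free form `σ * τ ≤ 1 ∧ 1/μ_J ≤ τ`. -/
theorem stmt1 {H1 H2 : Type}
    [NormedAddCommGroup H1] [InnerProductSpace ℝ H1] [CompleteSpace H1]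
    [TopologicalSpace.SeparableSpace H1]
    [NormedAddCommGroup H2] [InnerProductSpace ℝ H2] [CompleteSpace H2]
    [TopologicalSpace.SeparableSpace H2]
    (T : H1 →L[ℝ] H2) (hTcomp : IsCompactOperator T)
    (hTinj : Function.Injective T)
    (μ : ℕ → ℝ) (φ1 : ℕ → H1) (φ0 : ℕ → H2)
    (hφ1on : Orthonormal ℝ φ1)
    (hφ1tot : (span ℝ (Set.range φ1)).topologicalClosure = ⊤)
    (hφ0on : Orthonormal ℝ φ0)
    (hφ0tot : (span ℝ (Set.range φ0)).topologicalClosure = ⊤)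
    (hμpos : ∀ k, 0 < μ k) (hμmono : Antitone μ)
    (hμ0 : Tendsto μ atTop (nhds 0))
    (hsvd : ∀ k, T (φ1 k) = μ k • φ0 k)
    (J K : ℕ) (hJ : 0 < J) (hJK : J ≤ K)
    (Ψ : Submodule ℝ H1) [FiniteDimensional ℝ Ψ] (hΨ : Module.finrank ℝ Ψ = J)
    (B : Submodule ℝ H2) [FiniteDimensional ℝ B] (hB : Module.finrank ℝ B = K)
    (σ τ : ℝ)
    (hσ : σ = sInf {r | ∃ h ∈ Ψ, ‖h‖ = 1 ∧
      r = ‖(orthogonalProjection B (T h) : H2)‖})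
    (hτ : τ = sSup {r | ∃ h ∈ Ψ, T h ≠ 0 ∧ r = ‖h‖ / ‖T h‖}) :
    (σ * τ ≤ 1 ∧ 1 / μ (J - 1) ≤ τ)
    ∧ (Ψ = span ℝ (φ1 '' Set.Iio J) → τ ≤ 1 / μ (J - 1))
    ∧ (Ψ = span ℝ (φ1 '' Set.Iio J) → span ℝ (φ0 '' Set.Iio J) ≤ B →
        σ⁻¹ ≤ 1 / μ (J - 1) ∧ σ⁻¹ = τ ∧ τ = 1 / μ (J - 1)) := by
  have hb1sp : ⊤ ≤ (span ℝ (Set.range φ1)).topologicalClosure := hφ1tot.ge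
  have hb0sp : ⊤ ≤ (span ℝ (Set.range φ0)).topologicalClosure := hφ0tot.ge
  have hb1c : ∀ i, (HilbertBasis.mk hφ1on hb1sp) i = φ1 i :=
    fun i => congrFun (HilbertBasis.coe_mk hφ1on hb1sp) i
  have hb0c : ∀ i, (HilbertBasis.mk hφ0on hb0sp) i = φ0 i :=
    fun i => congrFun (HilbertBasis.coe_mk hφ0on hb0sp) i
  -- Parseval identities
  have parseval1 : ∀ h : H1, HasSum (fun k => (inner ℝ h (φ1 k) : ℝ) ^ 2) (‖h‖ ^ 2) := by
    intro h
    have h0 := (HilbertBasis.mk hφ1on hb1sp).hasSum_inner_mul_inner h h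
    simp only [hb1c, real_inner_self_eq_norm_sq] at h0
    convert h0 using 2 with k
    · rfl
    rw [sq, real_inner_comm (φ1 k) h]
  have parseval0 : ∀ x : H2, HasSum (fun k => (inner ℝ x (φ0 k) : ℝ) ^ 2) (‖x‖ ^ 2) := by
    intro x
    have h0 := (HilbertBasis.mk hφ0on hb0sp).hasSum_inner_mul_inner x x
    simp only [hb0c, real_inner_self_eq_norm_sq] at h0
    convert h0 using 2 with k
    · rfl
    rw [sq, real_inner_comm (φ0 k) x]
  -- key coefficient identity
  have hdense : Dense ((span ℝ (Set.range φ1) : Submodule ℝ H1) : Set H1) :=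
    Submodule.dense_iff_topologicalClosure_eq_top.mpr hφ1tot
  have key : ∀ (h : H1) (k : ℕ), (inner ℝ (T h) (φ0 k) : ℝ) = μ k * inner ℝ h (φ1 k) := by
    intro h k
    have hfg : ((innerSL ℝ (φ0 k)).comp T) = (μ k) • (innerSL ℝ (φ1 k)) := by
      apply ContinuousLinearMap.ext_on hdense
      rintro _ ⟨j, rfl⟩
      simp only [ContinuousLinearMap.comp_apply, ContinuousLinearMap.coe_smul',
        Pi.smul_apply, innerSL_apply_apply, smul_eq_mul]
      rw [hsvd j, real_inner_smul_right]
      rw [orthonormal_iff_ite.mp hφ0on k j, orthonormal_iff_ite.mp hφ1on k j]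
      by_cases hkj : k = j
      · subst hkj; simp
      · simp [hkj]
    have h1 := DFunLike.congr_fun hfg h
    simp only [ContinuousLinearMap.comp_apply, ContinuousLinearMap.smul_apply,
      innerSL_apply_apply, smul_eq_mul] at h1
    rw [← real_inner_comm (T h) (φ0 k), h1, real_inner_comm h (φ1 k)]
  have parsevalT : ∀ h : H1,
      HasSum (fun k => (μ k * (inner ℝ h (φ1 k) : ℝ)) ^ 2) (‖T h‖ ^ 2) := by
    intro h
    have := parseval0 (T h)
    simpa only [key] using this
  -- comparison lemmas
  have comp1 : ∀ h : H1, (∀ k, k < J - 1 → (inner ℝ h (φ1 k) : ℝ) = 0) →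
      ‖T h‖ ≤ μ (J - 1) * ‖h‖ := by
    intro h hc
    have hle : ‖T h‖ ^ 2 ≤ (μ (J - 1)) ^ 2 * ‖h‖ ^ 2 := by
      refine hasSum_le (fun k => ?_) (parsevalT h) ((parseval1 h).mul_left _)
      by_cases hk : k < J - 1
      · simp [hc k hk]
      · push_neg at hk
        rw [mul_pow]
        refine mul_le_mul_of_nonneg_right ?_ (sq_nonneg _)
        exact pow_le_pow_left₀ (hμpos k).le (hμmono hk) 2
    nlinarith [hle, mul_nonneg (hμpos (J-1)).le (norm_nonneg h), norm_nonneg (T h)]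
  have comp2 : ∀ h : H1, (∀ k, J ≤ k → (inner ℝ h (φ1 k) : ℝ) = 0) →
      μ (J - 1) * ‖h‖ ≤ ‖T h‖ := by
    intro h hc
    have hle : (μ (J - 1)) ^ 2 * ‖h‖ ^ 2 ≤ ‖T h‖ ^ 2 := by
      refine hasSum_le (fun k => ?_) ((parseval1 h).mul_left _) (parsevalT h)
      by_cases hk : J ≤ k
      · simp [hc k hk]
      · push_neg at hk
        rw [mul_pow]
        refine mul_le_mul_of_nonneg_right ?_ (sq_nonneg _)
        exact pow_le_pow_left₀ (hμpos (J - 1)).le (hμmono (by omega)) 2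
    nlinarith [hle, mul_nonneg (hμpos (J-1)).le (norm_nonneg h), norm_nonneg (T h)]
  -- orthogonality of span elements to later basis vectors
  have horthJ : ∀ k, J ≤ k → ∀ h ∈ span ℝ (φ1 '' Set.Iio J), (inner ℝ h (φ1 k) : ℝ) = 0 := by
    intro k hk h hh
    induction hh using Submodule.span_induction with
    | mem x hx =>
      obtain ⟨j, hj, rfl⟩ := hx
      have hjk : j ≠ k := by simp only [Set.mem_Iio] at hj; omega
      simpa [hjk] using orthonormal_iff_ite.mp hφ1on j k
    | zero => simp
    | add x y _ _ hx hy => simp [inner_add_left, hx, hy]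
    | smul a x _ hx => simp [inner_smul_left, hx]
  -- T maps the span of the first J φ1's into the span of the first J φ0's
  have hTspan : ∀ h ∈ span ℝ (φ1 '' Set.Iio J), T h ∈ span ℝ (φ0 '' Set.Iio J) := by
    intro h hh
    induction hh using Submodule.span_induction with
    | mem x hx =>
      obtain ⟨j, hj, rfl⟩ := hx
      rw [hsvd]
      exact smul_mem _ _ (subset_span ⟨j, hj, rfl⟩)
    | zero => simp
    | add x y _ _ hx hy => rw [map_add]; exact add_mem hx hy
    | smul a x _ hx => rw [map_smul]; exact smul_mem _ _ hx
  -- existence of a nonzero element of Ψ orthogonal to the first J-1 basis vectors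
  have hexists : ∃ h : H1, h ∈ Ψ ∧ h ≠ 0 ∧ ∀ k, k < J - 1 → (inner ℝ h (φ1 k) : ℝ) = 0 := by
    set L : Ψ →ₗ[ℝ] (Fin (J - 1) → ℝ) :=
      LinearMap.pi (fun i => ((innerSL ℝ (φ1 (i : ℕ))).comp (Ψ.subtypeL)).toLinearMap) with hL
    have hker : LinearMap.ker L ≠ ⊥ := by
      intro hbot
      have hinj : Function.Injective L := LinearMap.ker_eq_bot.mp hbot
      have hle := LinearMap.finrank_le_finrank_of_injective hinj
      rw [hΨ, Module.finrank_fin_fun] at hle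
      omega
    obtain ⟨x, hxker, hx0⟩ := (Submodule.ne_bot_iff _).mp hker
    refine ⟨x, x.2, by simpa using hx0, fun k hk => ?_⟩
    have h0 := congrFun (LinearMap.mem_ker.mp hxker) ⟨k, hk⟩
    simp only [hL, LinearMap.pi_apply, LinearMap.coe_comp, ContinuousLinearMap.coe_coe,
      Function.comp_apply, Submodule.coe_subtypeL', Submodule.coe_subtype, innerSL_apply_apply,
      Pi.zero_apply] at h0
    rw [real_inner_comm]
    exact h0
  -- minimum of ‖T ·‖ on the unit sphere of Ψ
  have : Nontrivial Ψ := Module.nontrivial_of_finrank_pos (R := ℝ) (hΨ ▸ hJ)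
  obtain ⟨x0, hx0⟩ := exists_ne (0 : Ψ)
  have hsph_ne : (Metric.sphere (0:Ψ) 1).Nonempty :=
    ⟨‖x0‖⁻¹ • x0, by rw [Metric.mem_sphere, dist_zero_right]; exact norm_smul_inv_norm hx0⟩
  obtain ⟨h₀, h₀mem, h₀min⟩ := (isCompact_sphere (0:Ψ) 1).exists_isMinOn hsph_ne
    (((T.continuous.comp continuous_subtype_val).norm).continuousOn)
  have hnorm1 : ‖(h₀ : H1)‖ = 1 := mem_sphere_zero_iff_norm.mp h₀mem
  set m : ℝ := ‖T (h₀ : H1)‖ with hm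
  have hh₀ne : (h₀ : H1) ≠ 0 := fun e => by simp [e] at hnorm1
  have hmpos : 0 < m := norm_pos_iff.mpr fun e => hh₀ne (hTinj (by simpa using e))
  have hmin : ∀ h ∈ Ψ, m * ‖h‖ ≤ ‖T h‖ := by
    intro h hh
    rcases eq_or_ne h 0 with rfl | hne
    · simp
    have hxne : (⟨h, hh⟩ : Ψ) ≠ 0 := by simpa [Submodule.mk_eq_zero] using hne
    set u : Ψ := ‖(⟨h, hh⟩ : Ψ)‖⁻¹ • ⟨h, hh⟩ with hu
    have humem : u ∈ Metric.sphere (0:Ψ) 1 := by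
      rw [mem_sphere_zero_iff_norm]; exact norm_smul_inv_norm hxne
    have h1 : m ≤ ‖T (u : H1)‖ := isMinOn_iff.mp h₀min u humem
    have hcoe : (u : H1) = ‖h‖⁻¹ • h := rfl
    rw [hcoe, map_smul, norm_smul, norm_inv, norm_norm] at h1
    have hn : 0 < ‖h‖ := norm_pos_iff.mpr hne
    calc m * ‖h‖ ≤ (‖h‖⁻¹ * ‖T h‖) * ‖h‖ := mul_le_mul_of_nonneg_right h1 hn.le
      _ = ‖T h‖ := by field_simp
  -- bounds on τ
  have hSτ_ub : ∀ r ∈ {r | ∃ h ∈ Ψ, T h ≠ 0 ∧ r = ‖h‖ / ‖T h‖}, r ≤ m⁻¹ := by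
    rintro r ⟨h, hh, hT0, rfl⟩
    have hTpos : 0 < ‖T h‖ := norm_pos_iff.mpr hT0
    rw [div_le_iff₀ hTpos]
    have h2 := hmin h hh
    calc ‖h‖ = m⁻¹ * (m * ‖h‖) := by field_simp
      _ ≤ m⁻¹ * ‖T h‖ := mul_le_mul_of_nonneg_left h2 (by positivity)
  have hbddτ : BddAbove {r | ∃ h ∈ Ψ, T h ≠ 0 ∧ r = ‖h‖ / ‖T h‖} := ⟨m⁻¹, hSτ_ub⟩
  have hτ0 : 0 ≤ τ := by
    rw [hτ]
    refine Real.sSup_nonneg ?_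
    rintro r ⟨h, hh, hT0, rfl⟩; positivity
  have hτm : τ ≤ m⁻¹ := by
    rw [hτ]; exact Real.sSup_le hSτ_ub (by positivity)
  -- bounds on σ
  have hproj : ∀ v : H2, ‖(orthogonalProjection B v : H2)‖ ≤ ‖v‖ := by
    intro v
    calc ‖(orthogonalProjection B v : H2)‖ = ‖orthogonalProjection B v‖ := rfl
      _ ≤ ‖orthogonalProjection B‖ * ‖v‖ := (orthogonalProjection B).le_opNorm v
      _ ≤ 1 * ‖v‖ := mul_le_mul_of_nonneg_right (orthogonalProjection_norm_le B) (norm_nonneg v)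
      _ = ‖v‖ := one_mul _
  have hbddσ : BddBelow {r | ∃ h ∈ Ψ, ‖h‖ = 1 ∧
      r = ‖(orthogonalProjection B (T h) : H2)‖} := by
    refine ⟨0, ?_⟩
    rintro r ⟨h, hh, h1, rfl⟩; positivity
  have hσm : σ ≤ m := by
    rw [hσ]
    refine le_trans (csInf_le hbddσ ⟨(h₀ : H1), h₀.2, hnorm1, rfl⟩) ?_
    exact hproj _
  have hσ0 : 0 ≤ σ := by
    rw [hσ]
    refine Real.sInf_nonneg ?_
    rintro r ⟨h, hh, h1, rfl⟩; positivity
  -- part 1a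
  have hστ : σ * τ ≤ 1 := by
    calc σ * τ ≤ m * m⁻¹ := mul_le_mul hσm hτm hτ0 hmpos.le
      _ = 1 := mul_inv_cancel₀ hmpos.ne'
  -- part 1b
  obtain ⟨hs, hsΨ, hs0, hsorth⟩ := hexists
  have hTs : ‖T hs‖ ≤ μ (J - 1) * ‖hs‖ := comp1 hs hsorth
  have hTs0 : T hs ≠ 0 := fun e => hs0 (hTinj (by simpa using e))
  have hτlb : 1 / μ (J - 1) ≤ τ := by
    rw [hτ]
    refine le_trans ?_ (le_csSup hbddτ ⟨hs, hsΨ, hTs0, rfl⟩)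
    rw [div_le_div_iff₀ (hμpos _) (norm_pos_iff.mpr hTs0)]
    nlinarith [hTs]
  -- part 2
  have part2 : Ψ = span ℝ (φ1 '' Set.Iio J) → τ ≤ 1 / μ (J - 1) := by
    intro hspan
    rw [hτ]
    refine Real.sSup_le ?_ (one_div_pos.mpr (hμpos _)).le
    rintro r ⟨h, hh, hT0, rfl⟩
    have h2 := comp2 h (fun k hk => horthJ k hk h (hspan ▸ hh))
    rw [div_le_div_iff₀ (norm_pos_iff.mpr hT0) (hμpos _)]
    nlinarith [h2]
  refine ⟨⟨hστ, hτlb⟩, part2, ?_⟩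
  -- part 3
  intro hspan hBle
  have hσlb : μ (J - 1) ≤ σ := by
    rw [hσ]
    refine le_csInf ⟨_, ⟨(h₀ : H1), h₀.2, hnorm1, rfl⟩⟩ ?_
    rintro r ⟨h, hh, hn1, rfl⟩
    have hTB : T h ∈ B := hBle (hTspan h (hspan ▸ hh))
    rw [show (orthogonalProjection B (T h) : H2) = T h from Submodule.starProjection_eq_self_iff.mpr hTB]
    have h2 := comp2 h (fun k hk => horthJ k hk h (hspan ▸ hh))
    rw [hn1, mul_one] at h2
    exact h2
  have hτeq : τ = 1 / μ (J - 1) := le_antisymm (part2 hspan) hτlb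
  have hσub : σ ≤ μ (J - 1) := by
    rw [hτeq, mul_one_div, div_le_one (hμpos _)] at hστ
    exact hστ
  have hσeq : σ = μ (J - 1) := le_antisymm hσub hσlb
  rw [hσeq, hτeq, one_div]
  exact ⟨le_refl _, rfl, rfl⟩
end
end

section
/- Let X be a random variable with values in a measurable space, let b_{K1}, ..., b_{KK} be measurable real-valued functions with b^K(x) = (b_{K1}(x), ..., b_{KK}(x))' and Gram matrix G_K = E[b^K(X) b^K(X)'] satisfying lambda_min(G_K) > 0, let b-tilde^K(x) = G_K^{-1/2} b^K(x), let x_1, ..., x_n be arbitrary points of the space, and let B-tilde be the n x K matrix with i-th row b-tilde^K(x_i)'. Then sup{ | (1/n) sum_{i=1}^n b(x_i)^2 - E[b(X)^2] | / E[b(X)^2] : b in span{b_{K1}, ..., b_{KK}}, E[b(X)^2] != 0 } = || B-tilde' B-tilde / n - I_K ||, the spectral norm of the symmetric matrix B-tilde' B-tilde / n - I_K. -/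
noncomputable section
open Matrix MeasureTheory

local notation "⟪" x ", " y "⟫_ℝ" => @inner ℝ _ _ x y

/-- Euclidean norm on ℝ^K. -/
def eucNorm {K : ℕ} (v : Fin K → ℝ) : ℝ := Real.sqrt (∑ k, v k ^ 2)

/-- Spectral norm (largest singular value) of a real matrix. -/
def specNorm {m n : ℕ} (A : Matrix (Fin m) (Fin n) ℝ) : ℝ :=
  sSup {r | ∃ v : Fin n → ℝ, eucNorm v ≤ 1 ∧ r = eucNorm (A.mulVec v)}

/-- For a self-adjoint operator on a real inner product space, the norm equals
the supremum of the absolute Rayleigh quotient. -/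
lemma sSup_rayleigh_eq_norm {F : Type*} [NormedAddCommGroup F] [InnerProductSpace ℝ F]
    [Nontrivial F] (T : F →L[ℝ] F) (hT : ∀ x y : F, ⟪T x, y⟫_ℝ = ⟪x, T y⟫_ℝ) :
    sSup {r | ∃ d : F, d ≠ 0 ∧ r = |⟪T d, d⟫_ℝ| / ‖d‖ ^ 2} = ‖T‖ := by
  set S := {r | ∃ d : F, d ≠ 0 ∧ r = |⟪T d, d⟫_ℝ| / ‖d‖ ^ 2} with hS
  obtain ⟨d₀, hd₀⟩ := exists_ne (0 : F)
  have hne : S.Nonempty := ⟨_, d₀, hd₀, rfl⟩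
  have hub : ∀ r ∈ S, r ≤ ‖T‖ := by
    rintro r ⟨d, hd, rfl⟩
    have hdn : (0:ℝ) < ‖d‖ := norm_pos_iff.2 hd
    rw [div_le_iff₀ (by positivity)]
    calc |⟪T d, d⟫_ℝ| ≤ ‖T d‖ * ‖d‖ := abs_real_inner_le_norm _ _
      _ ≤ (‖T‖ * ‖d‖) * ‖d‖ := by
          exact mul_le_mul_of_nonneg_right (T.le_opNorm d) (norm_nonneg d)
      _ = ‖T‖ * ‖d‖ ^ 2 := by ring
  have hbdd : BddAbove S := ⟨‖T‖, hub⟩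
  set M := sSup S with hM
  have hM0 : 0 ≤ M := by
    have h0 : (0:ℝ) ≤ |⟪T d₀, d₀⟫_ℝ| / ‖d₀‖ ^ 2 := by positivity
    exact h0.trans (le_csSup hbdd ⟨d₀, hd₀, rfl⟩)
  refine le_antisymm (csSup_le hne hub) ?_
  have key : ∀ x : F, |⟪T x, x⟫_ℝ| ≤ M * ‖x‖ ^ 2 := by
    intro x
    rcases eq_or_ne x 0 with rfl | hx
    · simp
    · have := le_csSup hbdd (⟨x, hx, rfl⟩ : |⟪T x, x⟫_ℝ| / ‖x‖ ^ 2 ∈ S)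
      have hxn : (0:ℝ) < ‖x‖ ^ 2 := pow_pos (norm_pos_iff.2 hx) 2
      calc |⟪T x, x⟫_ℝ| = |⟪T x, x⟫_ℝ| / ‖x‖ ^ 2 * ‖x‖ ^ 2 := by field_simp
        _ ≤ M * ‖x‖ ^ 2 := mul_le_mul_of_nonneg_right this hxn.le
  have key2 : ∀ x y : F, ⟪T x, y⟫_ℝ ≤ M / 2 * (‖x‖ ^ 2 + ‖y‖ ^ 2) := by
    intro x y
    have e1 : ⟪T (x + y), x + y⟫_ℝ - ⟪T (x - y), x - y⟫_ℝ = 4 * ⟪T x, y⟫_ℝ := by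
      have h1 : ⟪T y, x⟫_ℝ = ⟪T x, y⟫_ℝ := by rw [hT y x, real_inner_comm]
      simp only [map_add, map_sub, inner_add_left, inner_add_right, inner_sub_left,
        inner_sub_right]
      linarith
    have h2 := key (x + y)
    have h3 := key (x - y)
    have hp := parallelogram_law_with_norm ℝ x y
    nlinarith [le_abs_self (⟪T (x+y), x+y⟫_ℝ), neg_abs_le (⟪T (x-y), x-y⟫_ℝ),
      sq_nonneg (‖x+y‖), sq_nonneg (‖x-y‖)]
  have key3 : ∀ x : F, ‖T x‖ ≤ M * ‖x‖ := by
    intro x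
    rcases eq_or_ne (T x) 0 with h0 | h0
    · rw [h0, norm_zero]; positivity
    have hx : x ≠ 0 := by rintro rfl; simp at h0
    have hxn : (0:ℝ) < ‖x‖ := norm_pos_iff.2 hx
    have hTxn : (0:ℝ) < ‖T x‖ := norm_pos_iff.2 h0
    set t : ℝ := Real.sqrt (‖T x‖ / ‖x‖) with ht
    have htpos : 0 < t := Real.sqrt_pos.2 (by positivity)
    have ht2 : t ^ 2 = ‖T x‖ / ‖x‖ := Real.sq_sqrt (by positivity)
    have hkey := key2 (t • x) (t⁻¹ • T x)
    have hlhs : ⟪T (t • x), t⁻¹ • T x⟫_ℝ = ‖T x‖ ^ 2 := by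
      rw [T.map_smul, real_inner_smul_left, real_inner_smul_right,
        real_inner_self_eq_norm_sq]
      field_simp
    have hrhs : M / 2 * (‖t • x‖ ^ 2 + ‖t⁻¹ • T x‖ ^ 2) = M * ‖x‖ * ‖T x‖ := by
      rw [norm_smul, norm_smul, Real.norm_eq_abs, abs_of_pos htpos,
        Real.norm_eq_abs, abs_of_pos (inv_pos.2 htpos)]
      have h1 : (t * ‖x‖) ^ 2 = ‖T x‖ * ‖x‖ := by
        rw [mul_pow, ht2]; field_simp
      have h2 : (t⁻¹ * ‖T x‖) ^ 2 = ‖x‖ * ‖T x‖ := by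
        rw [mul_pow, inv_pow, ht2]; field_simp
      rw [h1, h2]; ring
    rw [hlhs, hrhs] at hkey
    nlinarith
  exact T.opNorm_le_bound hM0 key3

/-- For a symmetric real matrix, the supremum of the absolute Rayleigh quotient
equals the spectral norm. -/
lemma matrix_rayleigh {K : ℕ} (hK : 0 < K) (A : Matrix (Fin K) (Fin K) ℝ) (hA : Aᵀ = A) :
    sSup {r | ∃ d : Fin K → ℝ, d ≠ 0 ∧ r = |d ⬝ᵥ A.mulVec d| / (d ⬝ᵥ d)} = specNorm A := by
  haveI : Nonempty (Fin K) := ⟨⟨0, hK⟩⟩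
  haveI : Nontrivial (EuclideanSpace ℝ (Fin K)) := inferInstance
  set T : EuclideanSpace ℝ (Fin K) →L[ℝ] EuclideanSpace ℝ (Fin K) :=
    Matrix.toEuclideanCLM (𝕜 := ℝ) A with hTdef
  set e : (Fin K → ℝ) ≃ EuclideanSpace ℝ (Fin K) := (WithLp.equiv 2 (Fin K → ℝ)).symm with he
  have f1 : ∀ v : Fin K → ℝ, T (e v) = e (A.mulVec v) := by
    intro v
    rw [he, hTdef, WithLp.equiv_symm_apply, Matrix.toEuclideanCLM_toLp]
  have f2 : ∀ v : Fin K → ℝ, ‖e v‖ = eucNorm v := by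
    intro v
    rw [EuclideanSpace.norm_eq, eucNorm]
    congr 1
    exact Finset.sum_congr rfl fun i _ => by
      rw [he, WithLp.equiv_symm_apply, PiLp.toLp_apply, Real.norm_eq_abs, sq_abs]
  have f3 : ∀ v w : Fin K → ℝ, ⟪e v, e w⟫_ℝ = v ⬝ᵥ w := by
    intro v w
    rw [PiLp.inner_apply, dotProduct]
    exact Finset.sum_congr rfl fun i _ => by
      rw [he, WithLp.equiv_symm_apply, PiLp.toLp_apply, PiLp.toLp_apply, RCLike.inner_apply',
        starRingEnd_apply, star_trivial]
  have e0 : e 0 = 0 := rfl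
  have hT : ∀ x y : EuclideanSpace ℝ (Fin K), ⟪T x, y⟫_ℝ = ⟪x, T y⟫_ℝ := by
    intro x y
    obtain ⟨v, rfl⟩ := e.surjective x
    obtain ⟨w, rfl⟩ := e.surjective y
    rw [f1, f1, f3, f3, dotProduct_mulVec, ← mulVec_transpose, hA]
  have hspec : specNorm A = ‖T‖ := by
    rw [specNorm, ← T.sSup_unitClosedBall_eq_norm]
    congr 1
    ext r
    constructor
    · rintro ⟨v, hv, rfl⟩
      exact ⟨e v, mem_closedBall_zero_iff.2 ((f2 v).trans_le hv),
        by show ‖T (e v)‖ = _; rw [f1, f2]⟩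
    · rintro ⟨y, hy, rfl⟩
      obtain ⟨v, rfl⟩ := e.surjective y
      exact ⟨v, (f2 v).symm.trans_le (mem_closedBall_zero_iff.1 hy),
        by show ‖T (e v)‖ = _; rw [f1, f2]⟩
  rw [hspec, ← sSup_rayleigh_eq_norm T hT]
  congr 1
  ext r
  constructor
  · rintro ⟨d, hd, rfl⟩
    refine ⟨e d, fun h => hd (e.injective (h.trans e0.symm)), ?_⟩
    rw [f1, f3, ← real_inner_self_eq_norm_sq, f3, dotProduct_comm]
  · rintro ⟨x, hx, rfl⟩
    obtain ⟨d, rfl⟩ := e.surjective x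
    refine ⟨d, fun h => hx (by rw [h, e0]), ?_⟩
    rw [f1, f3, ← real_inner_self_eq_norm_sq, f3, dotProduct_comm]

/-- empirical identifiability as a matrix criterion:
the supremum of the normalized deviation between the empirical and true second
moments over the span of the basis equals the spectral norm of
`B̃'B̃/n - I_K`.  Here `R` is the positive-definite symmetric square root of the
Gram matrix `G`, so the orthonormalized basis is `b̃ = R⁻¹ b = G^{-1/2} b`. -/
theorem stmt7 {Ω E : Type} [MeasurableSpace Ω] [MeasurableSpace E]
    (P : Measure Ω) [IsProbabilityMeasure P]
    (X : Ω → E) (hX : Measurable X)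
    (K : ℕ) (hK : 0 < K) (b : Fin K → E → ℝ) (hb : ∀ k, Measurable (b k))
    (hbint : ∀ j k, Integrable (fun ω => b j (X ω) * b k (X ω)) P)
    (G : Matrix (Fin K) (Fin K) ℝ)
    (hG : G = Matrix.of fun j k => ∫ ω, b j (X ω) * b k (X ω) ∂P)
    (hGpos : ∀ v : Fin K → ℝ, v ≠ 0 → 0 < v ⬝ᵥ G.mulVec v)
    (R : Matrix (Fin K) (Fin K) ℝ) (hR : R.PosDef) (hRG : R * R = G)
    (n : ℕ) (hn : 0 < n) (x : Fin n → E) :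
    sSup {r | ∃ c : Fin K → ℝ,
        (∫ ω, (∑ k, c k * b k (X ω)) ^ 2 ∂P) ≠ 0 ∧
        r = |(1 / n : ℝ) * ∑ i, (∑ k, c k * b k (x i)) ^ 2
              - ∫ ω, (∑ k, c k * b k (X ω)) ^ 2 ∂P|
            / ∫ ω, (∑ k, c k * b k (X ω)) ^ 2 ∂P}
      = specNorm ((Matrix.of fun j k =>
          (1 / n : ℝ) * ∑ i, (R⁻¹.mulVec (fun l => b l (x i))) j
            * (R⁻¹.mulVec (fun l => b l (x i))) k) - 1) := by
  -- notation
  set u : Fin n → Fin K → ℝ := fun i => R⁻¹.mulVec (fun l => b l (x i)) with hu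
  set M : Matrix (Fin K) (Fin K) ℝ :=
    Matrix.of fun j k => (1 / n : ℝ) * ∑ i, u i j * u i k with hMdef
  -- basic facts about R
  have hdet : IsUnit R.det := isUnit_iff_ne_zero.2 hR.det_pos.ne'
  have hRinv : R * R⁻¹ = 1 := mul_nonsing_inv R hdet
  have hRinv' : R⁻¹ * R = 1 := nonsing_inv_mul R hdet
  have hRsymm : Rᵀ = R := hR.1
  -- the true second moment is the Gram quadratic form
  have key1 : ∀ c : Fin K → ℝ,
      ∫ ω, (∑ k, c k * b k (X ω)) ^ 2 ∂P = c ⬝ᵥ G.mulVec c := by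
    intro c
    have expand : ∀ ω, (∑ k, c k * b k (X ω)) ^ 2
        = ∑ j, ∑ k, c j * c k * (b j (X ω) * b k (X ω)) := by
      intro ω
      rw [sq, Finset.sum_mul_sum]
      exact Finset.sum_congr rfl fun j _ => Finset.sum_congr rfl fun k _ => by ring
    simp only [expand]
    rw [integral_finset_sum _ (fun j _ =>
      integrable_finset_sum _ (fun k _ => (hbint j k).const_mul _))]
    rw [hG]
    simp only [dotProduct, mulVec, of_apply]
    refine Finset.sum_congr rfl fun j _ => ?_
    rw [integral_finset_sum _ (fun k _ => (hbint j k).const_mul _), Finset.mul_sum]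
    refine Finset.sum_congr rfl fun k _ => ?_
    rw [MeasureTheory.integral_const_mul]
    ring
  -- the empirical coefficients through the orthonormalized basis
  have key2 : ∀ (c : Fin K → ℝ) (i : Fin n),
      ∑ k, c k * b k (x i) = (R.mulVec c) ⬝ᵥ u i := by
    intro c i
    have hvi : (fun l => b l (x i)) = R.mulVec (u i) := by
      rw [hu]; rw [mulVec_mulVec, hRinv, one_mulVec]
    calc ∑ k, c k * b k (x i) = c ⬝ᵥ (fun l => b l (x i)) := rfl
      _ = c ⬝ᵥ R.mulVec (u i) := by rw [← hvi]
      _ = (R.vecMul c) ⬝ᵥ u i := dotProduct_mulVec _ _ _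
      _ = (R.mulVec c) ⬝ᵥ u i := by rw [← mulVec_transpose, hRsymm]
  -- the empirical second moment is the quadratic form of M
  have key3 : ∀ d : Fin K → ℝ,
      (1 / n : ℝ) * ∑ i, (d ⬝ᵥ u i) ^ 2 = d ⬝ᵥ M.mulVec d := by
    intro d
    have expand : ∀ i, (d ⬝ᵥ u i) ^ 2 = ∑ j, ∑ k, d j * d k * (u i j * u i k) := by
      intro i
      rw [sq, dotProduct, Finset.sum_mul_sum]
      exact Finset.sum_congr rfl fun j _ => Finset.sum_congr rfl fun k _ => by ring
    simp only [expand]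
    rw [Finset.sum_comm]
    simp only [dotProduct, mulVec, hMdef, of_apply, Finset.mul_sum]
    refine Finset.sum_congr rfl fun j _ => ?_
    rw [Finset.sum_comm]
    refine Finset.sum_congr rfl fun k _ => ?_
    rw [Finset.sum_mul, Finset.mul_sum]
    exact Finset.sum_congr rfl fun i _ => by ring
  -- quadratic form of `G` equals squared norm of `d = R c`
  have key4 : ∀ c : Fin K → ℝ, c ⬝ᵥ G.mulVec c = (R.mulVec c) ⬝ᵥ (R.mulVec c) := by
    intro c
    rw [← hRG, ← mulVec_mulVec, dotProduct_mulVec, ← mulVec_transpose, hRsymm]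
  -- quadratic form of `M - 1`
  have key5 : ∀ d : Fin K → ℝ,
      d ⬝ᵥ (M - 1).mulVec d = d ⬝ᵥ M.mulVec d - d ⬝ᵥ d := by
    intro d
    rw [sub_mulVec, dotProduct_sub, one_mulVec]
  -- rewrite the LHS set as a Rayleigh-quotient set for A = M - 1
  have hset : {r | ∃ c : Fin K → ℝ,
        (∫ ω, (∑ k, c k * b k (X ω)) ^ 2 ∂P) ≠ 0 ∧
        r = |(1 / n : ℝ) * ∑ i, (∑ k, c k * b k (x i)) ^ 2
              - ∫ ω, (∑ k, c k * b k (X ω)) ^ 2 ∂P|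
            / ∫ ω, (∑ k, c k * b k (X ω)) ^ 2 ∂P}
      = {r | ∃ d : Fin K → ℝ, d ≠ 0 ∧ r = |d ⬝ᵥ (M - 1).mulVec d| / (d ⬝ᵥ d)} := by
    ext r
    constructor
    · rintro ⟨c, hc, rfl⟩
      have hc0 : c ≠ 0 := by
        rintro rfl
        apply hc
        rw [key1]
        simp
      refine ⟨R.mulVec c, ?_, ?_⟩
      · intro h
        apply hc0
        have : R⁻¹.mulVec (R.mulVec c) = 0 := by rw [h, mulVec_zero]
        rwa [mulVec_mulVec, hRinv', one_mulVec] at this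
      · rw [key1, key4, key5, ← key3]
        have : ∑ i, (∑ k, c k * b k (x i)) ^ 2 = ∑ i, ((R.mulVec c) ⬝ᵥ u i) ^ 2 :=
          Finset.sum_congr rfl fun i _ => by rw [key2 c i]
        rw [this]
    · rintro ⟨d, hd, rfl⟩
      set c : Fin K → ℝ := R⁻¹.mulVec d with hc
      have hdc : R.mulVec c = d := by
        rw [hc, mulVec_mulVec, hRinv, one_mulVec]
      have hc0 : c ≠ 0 := by
        rintro h
        apply hd
        rw [← hdc, h, mulVec_zero]
      refine ⟨c, ?_, ?_⟩
      · rw [key1]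
        exact (hGpos c hc0).ne'
      · rw [key1, key4, key5, hdc, ← key3]
        have : ∑ i, (∑ k, c k * b k (x i)) ^ 2 = ∑ i, (d ⬝ᵥ u i) ^ 2 :=
          Finset.sum_congr rfl fun i _ => by rw [key2 c i, hdc]
        rw [this]
  rw [hset]
  refine matrix_rayleigh hK (M - 1) ?_
  rw [transpose_sub, transpose_one]
  congr 1
  ext j k
  simp only [transpose_apply, hMdef, of_apply]
  exact congrArg _ (Finset.sum_congr rfl fun i _ => mul_comm _ _)
end
end

section
/- There exists a universal constant C < infinity such that the following holds. Let J <= K be positive integers, let S and S-hat be real J x K matrices with ||S|| <= 1 and with smallest (J-th) singular value sigma of S satisfying sigma > 0, and let A be a real symmetric positive semidefinite K x K matrix with ||A - I_K|| <= 1/2 and sqrt(2) ||S-hat - S|| + (1 + 2^{-1/2})^{-1} ||A - I_K|| <= sigma / 2. Define D = S' (S S')^{-1} S and D-hat = A^{-1} S-hat' ( S-hat A^{-1} S-hat' )^{-1} S-hat A^{-1} (both well defined under these hypotheses). Then || D-hat - D || <= C * ( ||A - I_K|| + sigma^{-1} ( ||S-hat - S|| + ||A - I_K|| ) ). -/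
noncomputable section
open Matrix

/-- Smallest (J-th) singular value of a `J × K` matrix (`J ≤ K`):
`inf { ‖Sᵀ v‖ : v ∈ ℝ^J, ‖v‖ = 1 }`. -/
def minSingVal {J K : ℕ} (S : Matrix (Fin J) (Fin K) ℝ) : ℝ :=
  sInf {r | ∃ v : Fin J → ℝ, eucNorm v = 1 ∧ r = eucNorm (Sᵀ.mulVec v)}

open scoped Matrix.Norms.L2Operator

variable {m n l : ℕ}

lemma eucNorm_eq_norm (v : Fin n → ℝ) :
    eucNorm v = ‖(WithLp.equiv 2 (Fin n → ℝ)).symm v‖ := by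
  simp [eucNorm, EuclideanSpace.norm_eq, Real.norm_eq_abs, sq_abs]

lemma eucNorm_nonneg (v : Fin n → ℝ) : 0 ≤ eucNorm v := Real.sqrt_nonneg _

lemma eucNorm_zero : eucNorm (0 : Fin n → ℝ) = 0 := by
  simp [eucNorm]

lemma eucNorm_eq_zero {v : Fin n → ℝ} (h : eucNorm v = 0) : v = 0 := by
  rw [eucNorm_eq_norm] at h
  have := norm_eq_zero.mp h
  simpa using congrArg (WithLp.equiv 2 (Fin n → ℝ)) this

lemma eucNorm_smul (c : ℝ) (v : Fin n → ℝ) : eucNorm (c • v) = |c| * eucNorm v := by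
  rw [eucNorm_eq_norm, eucNorm_eq_norm,
    show (WithLp.equiv 2 (Fin n → ℝ)).symm (c • v) = c • (WithLp.equiv 2 (Fin n → ℝ)).symm v by
      simp,
    norm_smul, Real.norm_eq_abs]

lemma eucNorm_sq (v : Fin n → ℝ) : eucNorm v ^ 2 = v ⬝ᵥ v := by
  rw [eucNorm]
  rw [Real.sq_sqrt (by positivity)]
  simp [dotProduct, sq]

lemma dotProduct_le (x y : Fin n → ℝ) : x ⬝ᵥ y ≤ eucNorm x * eucNorm y := by
  rw [eucNorm_eq_norm, eucNorm_eq_norm]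
  have := real_inner_le_norm ((WithLp.equiv 2 (Fin n → ℝ)).symm x)
    ((WithLp.equiv 2 (Fin n → ℝ)).symm y)
  rw [show (inner ℝ ((WithLp.equiv 2 (Fin n → ℝ)).symm x) ((WithLp.equiv 2 (Fin n → ℝ)).symm y) : ℝ)
      = x ⬝ᵥ y from ?_] at this
  · exact this
  · simp [PiLp.inner_apply, dotProduct, RCLike.inner_apply, mul_comm]

lemma eucNorm_mulVec_le (M : Matrix (Fin m) (Fin n) ℝ) (v : Fin n → ℝ) :
    eucNorm (M *ᵥ v) ≤ ‖M‖ * eucNorm v := by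
  rw [eucNorm_eq_norm, eucNorm_eq_norm]
  exact M.l2_opNorm_mulVec _

lemma opNorm_le_of (M : Matrix (Fin m) (Fin n) ℝ) {c : ℝ} (hc : 0 ≤ c)
    (h : ∀ v, eucNorm (M *ᵥ v) ≤ c * eucNorm v) : ‖M‖ ≤ c := by
  rw [Matrix.l2_opNorm_def]
  refine ContinuousLinearMap.opNorm_le_bound _ hc fun x => ?_
  have := h ((WithLp.equiv 2 (Fin n → ℝ)) x)
  rw [eucNorm_eq_norm, eucNorm_eq_norm] at this
  simpa [Matrix.toEuclideanLin_apply] using this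

lemma specNorm_eq (M : Matrix (Fin m) (Fin n) ℝ) : specNorm M = ‖M‖ := by
  have hub : ∀ r ∈ {r | ∃ v : Fin n → ℝ, eucNorm v ≤ 1 ∧ r = eucNorm (M.mulVec v)}, r ≤ ‖M‖ := by
    rintro r ⟨v, hv, rfl⟩
    calc eucNorm (M *ᵥ v) ≤ ‖M‖ * eucNorm v := eucNorm_mulVec_le M v
    _ ≤ ‖M‖ * 1 := by
        exact mul_le_mul_of_nonneg_left hv (norm_nonneg M)
    _ = ‖M‖ := mul_one _
  refine le_antisymm (Real.sSup_le hub (norm_nonneg M)) ?_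
  refine opNorm_le_of M ?_ fun v => ?_
  · have : eucNorm (M *ᵥ (0 : Fin n → ℝ)) ≤ specNorm M :=
      le_csSup ⟨‖M‖, hub⟩ ⟨0, by simp [eucNorm_zero], rfl⟩
    exact le_trans (by simp [eucNorm_zero]) this
  · rcases eq_or_ne v 0 with rfl | hv
    · simp [eucNorm_zero]
    · have hvn : eucNorm v ≠ 0 := fun h => hv (eucNorm_eq_zero h)
      have hvpos : 0 < eucNorm v := lt_of_le_of_ne (eucNorm_nonneg v) (Ne.symm hvn)
      have hmem : eucNorm (M *ᵥ ((eucNorm v)⁻¹ • v)) ∈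
          {r | ∃ w : Fin n → ℝ, eucNorm w ≤ 1 ∧ r = eucNorm (M.mulVec w)} := by
        exact ⟨(eucNorm v)⁻¹ • v, by
          rw [eucNorm_smul, abs_of_nonneg (by positivity)]
          rw [inv_mul_cancel₀ hvn], rfl⟩
      have h1 : eucNorm (M *ᵥ ((eucNorm v)⁻¹ • v)) ≤ specNorm M := le_csSup ⟨‖M‖, hub⟩ hmem
      rw [Matrix.mulVec_smul, eucNorm_smul, abs_of_nonneg (by positivity)] at h1
      calc eucNorm (M *ᵥ v) = eucNorm v * ((eucNorm v)⁻¹ * eucNorm (M *ᵥ v)) := by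
            field_simp
      _ ≤ eucNorm v * specNorm M := mul_le_mul_of_nonneg_left h1 (le_of_lt hvpos)
      _ = specNorm M * eucNorm v := mul_comm _ _

lemma minSingVal_le {J K : ℕ} (S : Matrix (Fin J) (Fin K) ℝ) (v : Fin J → ℝ) :
    minSingVal S * eucNorm v ≤ eucNorm (Sᵀ *ᵥ v) := by
  rcases eq_or_ne v 0 with rfl | hv
  · simp [eucNorm_zero, eucNorm_nonneg]
  · have hvn : eucNorm v ≠ 0 := fun h => hv (eucNorm_eq_zero h)
    have hvpos : 0 < eucNorm v := lt_of_le_of_ne (eucNorm_nonneg v) (Ne.symm hvn)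
    have hbdd : BddBelow {r | ∃ w : Fin J → ℝ, eucNorm w = 1 ∧ r = eucNorm (Sᵀ.mulVec w)} :=
      ⟨0, by rintro r ⟨w, hw, rfl⟩; exact eucNorm_nonneg _⟩
    have hmem : eucNorm (Sᵀ *ᵥ ((eucNorm v)⁻¹ • v)) ∈
        {r | ∃ w : Fin J → ℝ, eucNorm w = 1 ∧ r = eucNorm (Sᵀ.mulVec w)} :=
      ⟨(eucNorm v)⁻¹ • v, by
        rw [eucNorm_smul, abs_of_nonneg (by positivity), inv_mul_cancel₀ hvn], rfl⟩
    have h1 : minSingVal S ≤ eucNorm (Sᵀ *ᵥ ((eucNorm v)⁻¹ • v)) := csInf_le hbdd hmem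
    rw [Matrix.mulVec_smul, eucNorm_smul, abs_of_nonneg (by positivity)] at h1
    calc minSingVal S * eucNorm v ≤ (eucNorm v)⁻¹ * eucNorm (Sᵀ *ᵥ v) * eucNorm v :=
          mul_le_mul_of_nonneg_right h1 (le_of_lt hvpos)
    _ = eucNorm (Sᵀ *ᵥ v) := by field_simp

lemma conjT_eq_transpose (M : Matrix (Fin m) (Fin n) ℝ) : Mᴴ = Mᵀ := by
  ext i j; simp [Matrix.conjTranspose_apply]

lemma l2norm_transpose (M : Matrix (Fin m) (Fin n) ℝ) : ‖Mᵀ‖ = ‖M‖ := by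
  rw [← conjT_eq_transpose, Matrix.l2_opNorm_conjTranspose]

lemma norm_one_le : ‖(1 : Matrix (Fin n) (Fin n) ℝ)‖ ≤ 1 :=
  opNorm_le_of _ zero_le_one fun v => by simp [Matrix.one_mulVec]

lemma dot_mulVec_left (M : Matrix (Fin m) (Fin n) ℝ) (x : Fin m → ℝ) (y : Fin n → ℝ) :
    (M *ᵥ y) ⬝ᵥ x = y ⬝ᵥ (Mᵀ *ᵥ x) := by
  rw [Matrix.dotProduct_mulVec, Matrix.vecMul_transpose, dotProduct_comm]

lemma inv_facts (M : Matrix (Fin n) (Fin n) ℝ) {c : ℝ} (hc : 0 < c)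
    (h : ∀ v, c * eucNorm v ≤ eucNorm (M *ᵥ v)) :
    IsUnit M.det ∧ ‖M⁻¹‖ ≤ c⁻¹ := by
  have hdet : IsUnit M.det := by
    rw [isUnit_iff_ne_zero]
    intro hd
    obtain ⟨v, hv, hMv⟩ := (Matrix.exists_mulVec_eq_zero_iff).mpr hd
    have := h v
    rw [hMv, eucNorm_zero] at this
    have hvpos : 0 < eucNorm v :=
      lt_of_le_of_ne (eucNorm_nonneg v) (Ne.symm fun h0 => hv (eucNorm_eq_zero h0))
    nlinarith
  refine ⟨hdet, opNorm_le_of _ (by positivity) fun v => ?_⟩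
  have h2 := h (M⁻¹ *ᵥ v)
  rw [Matrix.mulVec_mulVec, Matrix.mul_nonsing_inv M hdet, Matrix.one_mulVec] at h2
  calc eucNorm (M⁻¹ *ᵥ v) = c⁻¹ * (c * eucNorm (M⁻¹ *ᵥ v)) := by field_simp
  _ ≤ c⁻¹ * eucNorm v := mul_le_mul_of_nonneg_left h2 (by positivity)

lemma le_of_sq_le_sq' {a b : ℝ} (ha : 0 ≤ a) (hb : 0 ≤ b) (h : a ^ 2 ≤ b ^ 2) : a ≤ b := by
  nlinarith

lemma psd_cs {M : Matrix (Fin n) (Fin n) ℝ} (hsym : Mᵀ = M)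
    (h : ∀ x, 0 ≤ x ⬝ᵥ (M *ᵥ x)) (x y : Fin n → ℝ) :
    (x ⬝ᵥ (M *ᵥ y)) ^ 2 ≤ (x ⬝ᵥ (M *ᵥ x)) * (y ⬝ᵥ (M *ᵥ y)) := by
  have hyx : y ⬝ᵥ (M *ᵥ x) = x ⬝ᵥ (M *ᵥ y) := by
    conv_rhs => rw [dotProduct_comm, dot_mulVec_left, hsym]
  have key : ∀ t : ℝ, 0 ≤ (y ⬝ᵥ (M *ᵥ y)) * (t * t) + (2 * (x ⬝ᵥ (M *ᵥ y))) * t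
      + (x ⬝ᵥ (M *ᵥ x)) := by
    intro t
    have h0 := h (x + t • y)
    rw [Matrix.mulVec_add, Matrix.mulVec_smul, add_dotProduct, smul_dotProduct,
      dotProduct_add, dotProduct_add, dotProduct_smul, dotProduct_smul, smul_eq_mul,
      smul_eq_mul, smul_eq_mul, hyx] at h0
    nlinarith [h0]
  have hd := discrim_le_zero key
  rw [discrim] at hd
  nlinarith [hd]

lemma lower_of_quad {M : Matrix (Fin n) (Fin n) ℝ} {c : ℝ} (hc : 0 ≤ c)
    (h : ∀ v, c * eucNorm v ^ 2 ≤ v ⬝ᵥ (M *ᵥ v)) :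
    ∀ v, c * eucNorm v ≤ eucNorm (M *ᵥ v) := by
  intro v
  rcases eq_or_ne v 0 with rfl | hv
  · simp [eucNorm_zero]
  · have hvpos : 0 < eucNorm v :=
      lt_of_le_of_ne (eucNorm_nonneg v) (Ne.symm fun h0 => hv (eucNorm_eq_zero h0))
    have h1 := h v
    have h2 : v ⬝ᵥ (M *ᵥ v) ≤ eucNorm v * eucNorm (M *ᵥ v) := dotProduct_le _ _
    have h3 : c * eucNorm v ^ 2 ≤ eucNorm v * eucNorm (M *ᵥ v) := le_trans h1 h2
    nlinarith [h3]

lemma quad_eq {J K : ℕ} (R : Matrix (Fin J) (Fin K) ℝ) (v : Fin J → ℝ) :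
    v ⬝ᵥ ((R * Rᵀ) *ᵥ v) = eucNorm (Rᵀ *ᵥ v) ^ 2 := by
  rw [← Matrix.mulVec_mulVec, eucNorm_sq, ← dot_mulVec_left R v (Rᵀ *ᵥ v), dotProduct_comm]

lemma proj_facts {J K : ℕ} (R : Matrix (Fin J) (Fin K) ℝ) {c : ℝ} (hc : 0 < c)
    (h : ∀ v, c * eucNorm v ≤ eucNorm (Rᵀ *ᵥ v)) :
    IsUnit (R * Rᵀ).det ∧ ‖Rᵀ * (R * Rᵀ)⁻¹‖ ≤ c⁻¹ ∧ ‖Rᵀ * (R * Rᵀ)⁻¹ * R‖ ≤ 1 ∧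
      (Rᵀ * (R * Rᵀ)⁻¹ * R) * Rᵀ = Rᵀ ∧ (Rᵀ * (R * Rᵀ)⁻¹ * R)ᵀ = Rᵀ * (R * Rᵀ)⁻¹ * R := by
  obtain ⟨G, hG⟩ : ∃ G, G = R * Rᵀ := ⟨_, rfl⟩
  rw [← hG]
  have hGsym : Gᵀ = G := by rw [hG, Matrix.transpose_mul, Matrix.transpose_transpose]
  have hGlow : ∀ v, c ^ 2 * eucNorm v ≤ eucNorm (G *ᵥ v) := by
    refine lower_of_quad (by positivity) fun v => ?_
    rw [hG, quad_eq]
    have h1 := h v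
    nlinarith [eucNorm_nonneg v, eucNorm_nonneg (Rᵀ *ᵥ v), hc.le,
      mul_le_mul h1 h1 (mul_nonneg hc.le (eucNorm_nonneg v)) (eucNorm_nonneg _)]
  obtain ⟨hGdet, hGinv⟩ := inv_facts G (by positivity) hGlow
  have hGinvsym : (G⁻¹)ᵀ = G⁻¹ := by rw [Matrix.transpose_nonsing_inv, hGsym]
  have hGGinv : G * G⁻¹ = 1 := Matrix.mul_nonsing_inv G hGdet
  have hGinvG : G⁻¹ * G = 1 := Matrix.nonsing_inv_mul G hGdet
  have hc2 : ‖Rᵀ * G⁻¹‖ ≤ c⁻¹ := by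
    refine opNorm_le_of _ (inv_nonneg.mpr hc.le) fun v => ?_
    have key : eucNorm ((Rᵀ * G⁻¹) *ᵥ v) ^ 2 = (G⁻¹ *ᵥ v) ⬝ᵥ v := by
      rw [← Matrix.mulVec_mulVec, ← quad_eq R (G⁻¹ *ᵥ v), ← hG, Matrix.mulVec_mulVec,
        hGGinv, Matrix.one_mulVec]
    have h2 : (G⁻¹ *ᵥ v) ⬝ᵥ v ≤ (c ^ 2)⁻¹ * eucNorm v ^ 2 := by
      calc (G⁻¹ *ᵥ v) ⬝ᵥ v ≤ eucNorm (G⁻¹ *ᵥ v) * eucNorm v := dotProduct_le _ _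
      _ ≤ (c ^ 2)⁻¹ * eucNorm v * eucNorm v := by
          refine mul_le_mul_of_nonneg_right (le_trans (eucNorm_mulVec_le G⁻¹ v) ?_)
            (eucNorm_nonneg v)
          exact mul_le_mul_of_nonneg_right hGinv (eucNorm_nonneg v)
      _ = (c ^ 2)⁻¹ * eucNorm v ^ 2 := by ring
    refine le_of_sq_le_sq' (eucNorm_nonneg _)
      (mul_nonneg (inv_nonneg.mpr hc.le) (eucNorm_nonneg v)) ?_
    rw [key]
    calc (G⁻¹ *ᵥ v) ⬝ᵥ v ≤ (c ^ 2)⁻¹ * eucNorm v ^ 2 := h2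
    _ = (c⁻¹ * eucNorm v) ^ 2 := by rw [mul_pow, ← inv_pow]
  have hPsym : (Rᵀ * G⁻¹ * R)ᵀ = Rᵀ * G⁻¹ * R := by
    rw [Matrix.transpose_mul, Matrix.transpose_mul, Matrix.transpose_transpose, hGinvsym,
      Matrix.mul_assoc]
  have hPR : Rᵀ * G⁻¹ * R * Rᵀ = Rᵀ := by
    rw [Matrix.mul_assoc (Rᵀ * G⁻¹) R Rᵀ, ← hG, Matrix.mul_assoc, hGinvG, Matrix.mul_one]
  have hPP : (Rᵀ * G⁻¹ * R) * (Rᵀ * G⁻¹ * R) = Rᵀ * G⁻¹ * R := by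
    calc (Rᵀ * G⁻¹ * R) * (Rᵀ * G⁻¹ * R) = ((Rᵀ * G⁻¹ * R * Rᵀ) * G⁻¹) * R := by
          simp only [Matrix.mul_assoc]
    _ = Rᵀ * G⁻¹ * R := by rw [hPR]
  have hPnorm : ‖Rᵀ * G⁻¹ * R‖ ≤ 1 := by
    refine opNorm_le_of _ zero_le_one fun v => ?_
    have key : eucNorm ((Rᵀ * G⁻¹ * R) *ᵥ v) ^ 2 = v ⬝ᵥ ((Rᵀ * G⁻¹ * R) *ᵥ v) := by
      rw [eucNorm_sq, dot_mulVec_left (Rᵀ * G⁻¹ * R) ((Rᵀ * G⁻¹ * R) *ᵥ v) v, hPsym,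
        dotProduct_comm, Matrix.mulVec_mulVec, hPP, dotProduct_comm]
    have h2 : v ⬝ᵥ ((Rᵀ * G⁻¹ * R) *ᵥ v) ≤ eucNorm v * eucNorm ((Rᵀ * G⁻¹ * R) *ᵥ v) :=
      dotProduct_le _ _
    rcases eq_or_lt_of_le (eucNorm_nonneg ((Rᵀ * G⁻¹ * R) *ᵥ v)) with h0 | h0
    · rw [← h0, one_mul]; exact eucNorm_nonneg v
    · nlinarith [key, h2]
  exact ⟨hG ▸ hGdet, hc2, hPnorm, hPR, hPsym⟩

lemma eucNorm_add_le (x y : Fin n → ℝ) : eucNorm (x + y) ≤ eucNorm x + eucNorm y := by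
  rw [eucNorm_eq_norm, eucNorm_eq_norm, eucNorm_eq_norm,
    show (WithLp.equiv 2 (Fin n → ℝ)).symm (x + y)
      = (WithLp.equiv 2 (Fin n → ℝ)).symm x + (WithLp.equiv 2 (Fin n → ℝ)).symm y by simp]
  exact norm_add_le _ _

lemma psd_quad {M : Matrix (Fin n) (Fin n) ℝ} (h : M.PosSemidef) (x : Fin n → ℝ) :
    0 ≤ x ⬝ᵥ (M *ᵥ x) := by simpa using h.dotProduct_mulVec_nonneg x

lemma neg_dot_le (x y : Fin n → ℝ) : -(eucNorm x * eucNorm y) ≤ x ⬝ᵥ y := by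
  have h := dotProduct_le (-x) y
  have hn : eucNorm (-x) = eucNorm x := by
    rw [show -x = (-1 : ℝ) • x by funext i; simp, eucNorm_smul]; norm_num
  rw [neg_dotProduct, hn] at h
  linarith

lemma sqrt2_sq : Real.sqrt 2 ^ 2 = 2 := Real.sq_sqrt (by norm_num)
lemma sqrt2_pos : 0 < Real.sqrt 2 := Real.sqrt_pos.mpr (by norm_num)
lemma sqrt2_lb : (1.414 : ℝ) ≤ Real.sqrt 2 := by
  nlinarith [sqrt2_sq, Real.sqrt_nonneg 2]
lemma sqrt2_ub : Real.sqrt 2 ≤ (1.415 : ℝ) := by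
  nlinarith [sqrt2_sq, Real.sqrt_nonneg 2]
lemma coef_eq : (1 + (Real.sqrt 2)⁻¹)⁻¹ = 2 - Real.sqrt 2 := by
  refine inv_eq_of_mul_eq_one_right ?_
  have hne : Real.sqrt 2 ≠ 0 := ne_of_gt sqrt2_pos
  field_simp
  nlinarith [sqrt2_sq]

lemma num1 {σ ε δ : ℝ} (hε : 0 ≤ ε) (hδ : 0 ≤ δ)
    (h : Real.sqrt 2 * ε + (2 - Real.sqrt 2) * δ ≤ σ / 2) :
    (10/7) * ε + (50/49) * δ ≤ (8/9) * σ := by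
  have h1 : (1.414 : ℝ) * ε ≤ Real.sqrt 2 * ε :=
    mul_le_mul_of_nonneg_right sqrt2_lb hε
  have h2 : (0.585 : ℝ) * δ ≤ (2 - Real.sqrt 2) * δ := by
    nlinarith [sqrt2_ub]
  linarith

lemma num2 {σ ε δ t x : ℝ} (hσ : 0 < σ) (hε : 0 ≤ ε) (hδ : 0 ≤ δ)
    (ht : t ≤ (10/7) * ε + (50/49) * δ)
    (hx : x ≤ (50/49 * δ) * (1 * (10/7)) + (1 * (50/49 * δ)
      + ((σ/9)⁻¹ * (t * 2) + 2 * t * σ⁻¹))) :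
    x ≤ 40 * (δ + σ⁻¹ * (ε + δ)) := by
  have h9 : (σ/9)⁻¹ = 9 * σ⁻¹ := by
    rw [div_eq_mul_inv, mul_inv, ← div_eq_mul_inv]
    field_simp
  have hi : 0 ≤ σ⁻¹ := inv_nonneg.mpr hσ.le
  rw [h9] at hx
  nlinarith [mul_nonneg hi hε, mul_nonneg hi hδ, mul_le_mul_of_nonneg_left ht hi]

set_option maxHeartbeats 2000000 in
/-- there is a universal constant `C` bounding the spectral norm
of `D̂ - D`, where `D = S'(SS')⁻¹S` and `D̂ = A⁻¹Ŝ'(ŜA⁻¹Ŝ')⁻¹ŜA⁻¹`.  Here `Asq`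
is the positive-semidefinite symmetric square root of `A` (so `A^{-1/2} = Asq⁻¹`). -/
theorem stmt12 :
    ∃ C : ℝ, 0 ≤ C ∧
      ∀ (J K : ℕ), 0 < J → J ≤ K →
        ∀ (S Shat : Matrix (Fin J) (Fin K) ℝ) (σ : ℝ)
          (A Asq : Matrix (Fin K) (Fin K) ℝ),
          specNorm S ≤ 1 → σ = minSingVal S → 0 < σ →
          A.PosSemidef → specNorm (A - 1) ≤ 1 / 2 →
          Asq.PosSemidef → Asq * Asq = A →
          Real.sqrt 2 * specNorm (Shat - S)
              + (1 + (Real.sqrt 2)⁻¹)⁻¹ * specNorm (A - 1) ≤ σ / 2 →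
          specNorm (A⁻¹ * Shatᵀ * (Shat * A⁻¹ * Shatᵀ)⁻¹ * Shat * A⁻¹
              - Sᵀ * (S * Sᵀ)⁻¹ * S)
            ≤ C * (specNorm (A - 1)
                + σ⁻¹ * (specNorm (Shat - S) + specNorm (A - 1))) := by
  refine ⟨40, by norm_num, ?_⟩
  intro J K hJ hJK S Shat σ A Asq hS hσdef hσpos hApsd hA12 hAsqpsd hAsqsq hmain
  simp only [specNorm_eq] at hS hA12 hmain ⊢
  set δ := ‖A - (1 : Matrix (Fin K) (Fin K) ℝ)‖ with hδdef
  set ε := ‖Shat - S‖ with hεdef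
  have hδ0 : 0 ≤ δ := norm_nonneg _
  have hε0 : 0 ≤ ε := norm_nonneg _
  have hσS : ∀ v, σ * eucNorm v ≤ eucNorm (Sᵀ *ᵥ v) := by
    intro v; rw [hσdef]; exact minSingVal_le S v
  -- quadratic lower bound for A
  have hA1 : ∀ v : Fin K → ℝ, (1/2 : ℝ) * eucNorm v ^ 2 ≤ v ⬝ᵥ (A *ᵥ v) := by
    intro v
    have hsplit : v ⬝ᵥ (A *ᵥ v) = v ⬝ᵥ v + v ⬝ᵥ ((A - 1) *ᵥ v) := by
      rw [Matrix.sub_mulVec, Matrix.one_mulVec, dotProduct_sub]; ring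
    have h1 : -(eucNorm v * eucNorm ((A - 1) *ᵥ v)) ≤ v ⬝ᵥ ((A - 1) *ᵥ v) := neg_dot_le _ _
    have h2 : eucNorm ((A - 1) *ᵥ v) ≤ δ * eucNorm v := eucNorm_mulVec_le _ v
    have h3 : v ⬝ᵥ v = eucNorm v ^ 2 := (eucNorm_sq v).symm
    nlinarith [eucNorm_nonneg v, mul_le_mul_of_nonneg_left h2 (eucNorm_nonneg v)]
  have hAsqT : Asqᵀ = Asq := by rw [← conjT_eq_transpose]; exact hAsqpsd.1
  have hAT : Aᵀ = A := by rw [← conjT_eq_transpose]; exact hApsd.1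
  -- Asq lower bound
  have hAsqA : ∀ v : Fin K → ℝ, eucNorm (Asq *ᵥ v) ^ 2 = v ⬝ᵥ (A *ᵥ v) := by
    intro v
    rw [eucNorm_sq, ← hAsqsq, ← Matrix.mulVec_mulVec, dot_mulVec_left, hAsqT,
      Matrix.mulVec_mulVec, dotProduct_comm, dotProduct_comm,
      ← Matrix.mulVec_mulVec]
  have hAsqlow : ∀ v, (7/10 : ℝ) * eucNorm v ≤ eucNorm (Asq *ᵥ v) := by
    intro v
    refine le_of_sq_le_sq' (mul_nonneg (by norm_num) (eucNorm_nonneg v)) (eucNorm_nonneg _) ?_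
    rw [hAsqA]
    nlinarith [hA1 v, eucNorm_nonneg v]
  obtain ⟨hAsqdet, hBnorm'⟩ := inv_facts Asq (by norm_num) hAsqlow
  have hBnorm : ‖Asq⁻¹‖ ≤ 10/7 := by
    refine le_trans hBnorm' (by norm_num)
  have hAdet : IsUnit A.det := by
    rw [← hAsqsq, Matrix.det_mul]; exact (hAsqdet.mul hAsqdet)
  have hAnorm : ‖A‖ ≤ 3/2 := by
    calc ‖A‖ = ‖A - 1 + 1‖ := by rw [sub_add_cancel]
    _ ≤ δ + ‖(1 : Matrix (Fin K) (Fin K) ℝ)‖ := norm_add_le _ _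
    _ ≤ 1/2 + 1 := add_le_add hA12 norm_one_le
    _ = 3/2 := by norm_num
  have hAsqnorm : ‖Asq‖ ≤ 5/4 := by
    have h1 : ‖Asq‖ * ‖Asq‖ = ‖A‖ := by
      rw [← Matrix.l2_opNorm_conjTranspose_mul_self Asq, conjT_eq_transpose, hAsqT, hAsqsq]
    nlinarith [norm_nonneg Asq]
  -- quadratic lower bound for Asq
  have hAsqquad : ∀ v : Fin K → ℝ, (2/5 : ℝ) * eucNorm v ^ 2 ≤ v ⬝ᵥ (Asq *ᵥ v) := by
    intro v
    rcases eq_or_ne v 0 with rfl | hv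
    · simp [eucNorm_zero]
    · have hvpos : 0 < eucNorm v :=
        lt_of_le_of_ne (eucNorm_nonneg v) (Ne.symm fun h0 => hv (eucNorm_eq_zero h0))
      have hq : (0:ℝ) < v ⬝ᵥ (A *ᵥ v) := by nlinarith [hA1 v]
      have hw2 : eucNorm (Asq *ᵥ v) ^ 2 = v ⬝ᵥ (A *ᵥ v) := hAsqA v
      have hcs := psd_cs hAsqT (psd_quad hAsqpsd) v (Asq *ᵥ v)
      rw [Matrix.mulVec_mulVec, hAsqsq] at hcs
      have hwq : (Asq *ᵥ v) ⬝ᵥ (Asq *ᵥ (Asq *ᵥ v)) ≤ (5/4) * (v ⬝ᵥ (A *ᵥ v)) := by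
        calc (Asq *ᵥ v) ⬝ᵥ (Asq *ᵥ (Asq *ᵥ v))
            ≤ eucNorm (Asq *ᵥ v) * eucNorm (Asq *ᵥ (Asq *ᵥ v)) := dotProduct_le _ _
        _ ≤ eucNorm (Asq *ᵥ v) * ((5/4) * eucNorm (Asq *ᵥ v)) := by
            refine mul_le_mul_of_nonneg_left ?_ (eucNorm_nonneg _)
            refine le_trans (eucNorm_mulVec_le Asq _) ?_
            exact mul_le_mul_of_nonneg_right hAsqnorm (eucNorm_nonneg _)
        _ = (5/4) * eucNorm (Asq *ᵥ v) ^ 2 := by ring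
        _ = (5/4) * (v ⬝ᵥ (A *ᵥ v)) := by rw [hw2]
      have hvAsq : 0 ≤ v ⬝ᵥ (Asq *ᵥ v) := psd_quad hAsqpsd v
      rw [Matrix.mulVec_mulVec, hAsqsq] at hwq
      have h5 : v ⬝ᵥ (A *ᵥ v) ≤ (5/4) * (v ⬝ᵥ (Asq *ᵥ v)) := by
        nlinarith [hcs, mul_le_mul_of_nonneg_left hwq hvAsq, hq, mul_pos hq hq]
      linarith [hA1 v]
  -- bound ‖Asq - 1‖
  have hlow1 : ∀ v, (7/5 : ℝ) * eucNorm v ≤ eucNorm ((Asq + 1) *ᵥ v) := by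
    refine lower_of_quad (by norm_num) fun v => ?_
    rw [Matrix.add_mulVec, Matrix.one_mulVec, dotProduct_add]
    have h3 : v ⬝ᵥ v = eucNorm v ^ 2 := (eucNorm_sq v).symm
    nlinarith [hAsqquad v]
  obtain ⟨hdet1, hinv1⟩ := inv_facts (Asq + 1) (by norm_num) hlow1
  have hAsq1 : ‖Asq - 1‖ ≤ (5/7) * δ := by
    have e : (Asq - 1) * (Asq + 1) = A - 1 := by
      have : (Asq - 1) * (Asq + 1) = Asq * Asq - 1 := by noncomm_ring
      rw [this, hAsqsq]
    have hfact : Asq - 1 = (A - 1) * (Asq + 1)⁻¹ := by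
      rw [← e, Matrix.mul_assoc, Matrix.mul_nonsing_inv _ hdet1, Matrix.mul_one]
    rw [hfact]
    calc ‖(A - 1) * (Asq + 1)⁻¹‖ ≤ δ * ‖(Asq + 1)⁻¹‖ := Matrix.l2_opNorm_mul _ _
    _ ≤ δ * (7/5 : ℝ)⁻¹ := mul_le_mul_of_nonneg_left hinv1 hδ0
    _ = (5/7) * δ := by ring_nf
  have hB1 : ‖Asq⁻¹ - 1‖ ≤ (50/49) * δ := by
    have hfact2 : Asq⁻¹ - 1 = Asq⁻¹ * (1 - Asq) := by
      rw [Matrix.mul_sub, Matrix.mul_one, Matrix.nonsing_inv_mul _ hAsqdet]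
    rw [hfact2]
    calc ‖Asq⁻¹ * (1 - Asq)‖ ≤ ‖Asq⁻¹‖ * ‖1 - Asq‖ := Matrix.l2_opNorm_mul _ _
    _ ≤ (10/7) * ((5/7) * δ) := by
        refine mul_le_mul hBnorm ?_ (norm_nonneg _) (by norm_num)
        rw [norm_sub_rev]; exact hAsq1
    _ = (50/49) * δ := by ring
  -- main inequality in sqrt-free form
  have hmain2 : Real.sqrt 2 * ε + (2 - Real.sqrt 2) * δ ≤ σ / 2 := by
    rw [← coef_eq]; exact hmain
  -- the perturbed matrix T = Shat * Asq⁻¹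
  obtain ⟨T, hT⟩ : ∃ T', T' = Shat * Asq⁻¹ := ⟨_, rfl⟩
  have hTS : ‖T - S‖ ≤ (10/7) * ε + (50/49) * δ := by
    have hdec : T - S = (Shat - S) * Asq⁻¹ + S * (Asq⁻¹ - 1) := by
      rw [hT, Matrix.sub_mul, Matrix.mul_sub, Matrix.mul_one]
      abel
    rw [hdec]
    calc ‖(Shat - S) * Asq⁻¹ + S * (Asq⁻¹ - 1)‖
        ≤ ‖(Shat - S) * Asq⁻¹‖ + ‖S * (Asq⁻¹ - 1)‖ := norm_add_le _ _
    _ ≤ ε * (10/7) + 1 * ((50/49) * δ) := by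
        refine add_le_add (le_trans (Matrix.l2_opNorm_mul _ _) ?_)
          (le_trans (Matrix.l2_opNorm_mul _ _) ?_)
        · exact mul_le_mul_of_nonneg_left hBnorm hε0
        · exact mul_le_mul hS hB1 (norm_nonneg _) zero_le_one
    _ = (10/7) * ε + (50/49) * δ := by ring
  have h89 : ‖T - S‖ ≤ (8/9) * σ := le_trans hTS (num1 hε0 hδ0 hmain2)
  have hTlow : ∀ v, (σ/9) * eucNorm v ≤ eucNorm (Tᵀ *ᵥ v) := by
    intro v
    have hsplit : Sᵀ *ᵥ v = Tᵀ *ᵥ v + (S - T)ᵀ *ᵥ v := by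
      rw [← Matrix.add_mulVec, ← Matrix.transpose_add,
        show T + (S - T) = S from by abel]
    have h1 : eucNorm (Sᵀ *ᵥ v) ≤ eucNorm (Tᵀ *ᵥ v) + eucNorm ((S - T)ᵀ *ᵥ v) := by
      rw [hsplit]; exact eucNorm_add_le _ _
    have h2 : eucNorm ((S - T)ᵀ *ᵥ v) ≤ (8/9) * σ * eucNorm v := by
      refine le_trans (eucNorm_mulVec_le _ v) ?_
      refine mul_le_mul_of_nonneg_right ?_ (eucNorm_nonneg v)
      rw [l2norm_transpose, norm_sub_rev]; exact h89
    have h3 := hσS v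
    have h4 : (σ/9) * eucNorm v = σ * eucNorm v - (8/9) * σ * eucNorm v := by ring
    linarith
  -- projections
  obtain ⟨hHdet, hSH, hQnorm, hQS, hQsym⟩ := proj_facts S hσpos hσS
  obtain ⟨hGdet, hTG, hPnorm, hPT, hPsym⟩ :=
    proj_facts T (div_pos hσpos (by norm_num)) hTlow
  have hSQ : S * (Sᵀ * (S * Sᵀ)⁻¹ * S) = S := by
    have h0 := congrArg Matrix.transpose hQS
    rwa [Matrix.transpose_mul, hQsym, Matrix.transpose_transpose] at h0
  -- bound on ‖P - Q‖
  have hQ2 : ‖(1 : Matrix (Fin K) (Fin K) ℝ) - Sᵀ * (S * Sᵀ)⁻¹ * S‖ ≤ 2 :=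
    le_trans (norm_sub_le _ _) (by linarith [norm_one_le (n := K), hQnorm])
  have hP2 : ‖(1 : Matrix (Fin K) (Fin K) ℝ) - Tᵀ * (T * Tᵀ)⁻¹ * T‖ ≤ 2 :=
    le_trans (norm_sub_le _ _) (by linarith [norm_one_le (n := K), hPnorm])
  have hstep1 : (Tᵀ * (T * Tᵀ)⁻¹ * T) * (1 - Sᵀ * (S * Sᵀ)⁻¹ * S)
      = (Tᵀ * (T * Tᵀ)⁻¹) * ((T - S) * (1 - Sᵀ * (S * Sᵀ)⁻¹ * S)) := by
    have h0 : S * (1 - Sᵀ * (S * Sᵀ)⁻¹ * S) = 0 := by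
      rw [Matrix.mul_sub, Matrix.mul_one, hSQ, sub_self]
    have h1 : T * (1 - Sᵀ * (S * Sᵀ)⁻¹ * S)
        = (T - S) * (1 - Sᵀ * (S * Sᵀ)⁻¹ * S) := by
      rw [Matrix.sub_mul, h0, sub_zero]
    rw [Matrix.mul_assoc (Tᵀ * (T * Tᵀ)⁻¹) T _, h1]
  have hstep2 : (1 - Tᵀ * (T * Tᵀ)⁻¹ * T) * (Sᵀ * (S * Sᵀ)⁻¹ * S)
      = ((1 - Tᵀ * (T * Tᵀ)⁻¹ * T) * (Sᵀ - Tᵀ)) * ((S * Sᵀ)⁻¹ * S) := by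
    have h0 : (1 - Tᵀ * (T * Tᵀ)⁻¹ * T) * Tᵀ = 0 := by
      rw [Matrix.sub_mul, Matrix.one_mul, hPT, sub_self]
    have h1 : (1 - Tᵀ * (T * Tᵀ)⁻¹ * T) * (Sᵀ - Tᵀ)
        = (1 - Tᵀ * (T * Tᵀ)⁻¹ * T) * Sᵀ := by
      rw [Matrix.mul_sub, h0, sub_zero]
    rw [h1]
    simp only [Matrix.mul_assoc]
  have hST : ‖Sᵀ - Tᵀ‖ = ‖T - S‖ := by
    rw [← Matrix.transpose_sub, l2norm_transpose, norm_sub_rev]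
  have hinvS : ‖(S * Sᵀ)⁻¹ * S‖ ≤ σ⁻¹ := by
    rw [← l2norm_transpose]
    have h0 : ((S * Sᵀ)⁻¹ * S)ᵀ = Sᵀ * (S * Sᵀ)⁻¹ := by
      rw [Matrix.transpose_mul, Matrix.transpose_nonsing_inv, Matrix.transpose_mul,
        Matrix.transpose_transpose]
    rw [h0]; exact hSH
  have hn1 : ‖(Tᵀ * (T * Tᵀ)⁻¹ * T) * (1 - Sᵀ * (S * Sᵀ)⁻¹ * S)‖
      ≤ (σ/9)⁻¹ * (‖T - S‖ * 2) := by
    rw [hstep1]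
    refine le_trans (Matrix.l2_opNorm_mul _ _) ?_
    refine mul_le_mul hTG (le_trans (Matrix.l2_opNorm_mul _ _) ?_) (norm_nonneg _)
      (inv_nonneg.mpr (by positivity))
    exact mul_le_mul_of_nonneg_left hQ2 (norm_nonneg _)
  have hn2 : ‖(1 - Tᵀ * (T * Tᵀ)⁻¹ * T) * (Sᵀ * (S * Sᵀ)⁻¹ * S)‖
      ≤ 2 * ‖T - S‖ * σ⁻¹ := by
    rw [hstep2]
    refine le_trans (Matrix.l2_opNorm_mul _ _) ?_
    refine mul_le_mul ?_ hinvS (norm_nonneg _) (by positivity)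
    refine le_trans (Matrix.l2_opNorm_mul _ _) ?_
    rw [hST]
    exact mul_le_mul_of_nonneg_right hP2 (norm_nonneg _)
  have hPQ : ‖Tᵀ * (T * Tᵀ)⁻¹ * T - Sᵀ * (S * Sᵀ)⁻¹ * S‖
      ≤ (σ/9)⁻¹ * (‖T - S‖ * 2) + 2 * ‖T - S‖ * σ⁻¹ := by
    have hdec : Tᵀ * (T * Tᵀ)⁻¹ * T - Sᵀ * (S * Sᵀ)⁻¹ * S
        = (Tᵀ * (T * Tᵀ)⁻¹ * T) * (1 - Sᵀ * (S * Sᵀ)⁻¹ * S)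
          - (1 - Tᵀ * (T * Tᵀ)⁻¹ * T) * (Sᵀ * (S * Sᵀ)⁻¹ * S) := by
      rw [Matrix.mul_sub, Matrix.mul_one, Matrix.sub_mul, Matrix.one_mul]
      abel
    rw [hdec]
    exact le_trans (norm_sub_le _ _) (add_le_add hn1 hn2)
  -- rewrite D-hat
  have hAinv : A⁻¹ = Asq⁻¹ * Asq⁻¹ := by rw [← hAsqsq, Matrix.mul_inv_rev]
  have hBT : (Asq⁻¹)ᵀ = Asq⁻¹ := by rw [Matrix.transpose_nonsing_inv, hAsqT]
  have hTt : Tᵀ = Asq⁻¹ * Shatᵀ := by rw [hT, Matrix.transpose_mul, hBT]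
  have hDhat : A⁻¹ * Shatᵀ * (Shat * A⁻¹ * Shatᵀ)⁻¹ * Shat * A⁻¹
      = Asq⁻¹ * (Tᵀ * (T * Tᵀ)⁻¹ * T) * Asq⁻¹ := by
    have hGeq : Shat * A⁻¹ * Shatᵀ = T * Tᵀ := by
      rw [hTt, hT, hAinv]; simp only [Matrix.mul_assoc]
    rw [hGeq, hTt, hT, hAinv]
    simp only [Matrix.mul_assoc]
  rw [hDhat]
  -- final decomposition
  have hdec3 : Asq⁻¹ * (Tᵀ * (T * Tᵀ)⁻¹ * T) * Asq⁻¹ - Sᵀ * (S * Sᵀ)⁻¹ * S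
      = (Asq⁻¹ - 1) * ((Tᵀ * (T * Tᵀ)⁻¹ * T) * Asq⁻¹)
        + ((Tᵀ * (T * Tᵀ)⁻¹ * T) * (Asq⁻¹ - 1)
          + (Tᵀ * (T * Tᵀ)⁻¹ * T - Sᵀ * (S * Sᵀ)⁻¹ * S)) := by
    rw [Matrix.sub_mul, Matrix.mul_sub, Matrix.one_mul, Matrix.mul_one, Matrix.mul_assoc]
    abel
  rw [hdec3]
  refine num2 hσpos hε0 hδ0 hTS ?_
  refine le_trans (norm_add_le _ _) (add_le_add ?_ (le_trans (norm_add_le _ _)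
    (add_le_add ?_ hPQ)))
  · refine le_trans (Matrix.l2_opNorm_mul _ _) ?_
    refine mul_le_mul hB1 (le_trans (Matrix.l2_opNorm_mul _ _) ?_) (norm_nonneg _)
      (by positivity)
    exact mul_le_mul hPnorm hBnorm (norm_nonneg _) zero_le_one
  · refine le_trans (Matrix.l2_opNorm_mul _ _) ?_
    exact mul_le_mul hPnorm hB1 (norm_nonneg _) zero_le_one
end
end
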